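/- Suppose the family of distributions P(o, κ | i) over outcome assignments o and strict partial orders κ on Γ satisfies the free choice and closed laboratories assumptions. Then for every setting assignment i, every outcome assignment o, and every strict partial order κ on Γ with P(o, κ | i) > 0, the coarse-grained relation 𝒞_κ is a strict partial order on the set of parties Δ. -/

import Mathlib

open Finset

/-- The variables associated to the parties: for a party `X`, `(X,0)` is `X_I`, `(X,1)` is
`X_O`, `(X,2)` is the setting variable `I_X` and `(X,3)` is the outcome variable `O_X`. -/
abbrev PVar (Δ : Type) := Δ × Fin 4

def XIv {Δ : Type} (X : Δ) : PVar Δ := (X, 0)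
def XOv {Δ : Type} (X : Δ) : PVar Δ := (X, 1)
def IVv {Δ : Type} (X : Δ) : PVar Δ := (X, 2)
def OVv {Δ : Type} (X : Δ) : PVar Δ := (X, 3)

/-- Relations on the set `Γ` of variables, given as `Bool`-valued functions so that the
collection of all of them forms a finite type over which probabilities can be summed. -/
abbrev CRel (Δ : Type) := PVar Δ → PVar Δ → Bool

/-- `κ` is a strict partial order (irreflexive and transitive). -/
def IsSPO {Δ : Type} (κ : CRel Δ) : Prop :=
  (∀ a, κ a a = false) ∧ ∀ a b c, κ a b = true → κ b c = true → κ a c = true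

/-- `r` is a strict partial order on the subset `S`. -/
def IsSPOOn {Δ : Type} (r : CRel Δ) (S : Finset (PVar Δ)) : Prop :=
  (∀ a ∈ S, r a a = false) ∧
  ∀ a ∈ S, ∀ b ∈ S, ∀ c ∈ S, r a b = true → r b c = true → r a c = true

/-- The causal past `𝒫_v` of a variable `v` w.r.t. `κ`. -/
def pastSet {Δ : Type} [Fintype Δ] [DecidableEq Δ] (κ : CRel Δ) (v : PVar Δ) :
    Finset (PVar Δ) :=
  Finset.univ.filter (fun Y => κ Y v = true)

/-- The causal elsewhere `ℰ_v` of a variable `v` w.r.t. `κ`. -/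
def elseSet {Δ : Type} [Fintype Δ] [DecidableEq Δ] (κ : CRel Δ) (v : PVar Δ) :
    Finset (PVar Δ) :=
  Finset.univ.filter (fun Y => Y ≠ v ∧ κ Y v = false ∧ κ v Y = false)

/-- The marginal probability entering the free choice assumption for party `X`: the
probability that the causal past of `I_X` is `𝒴`, its causal elsewhere is `𝒵`, the causal
order restricted to `𝒴 ∪ 𝒵` is `κ₀`, and the outcome variables lying in `𝒴 ∪ 𝒵` take the
values specified by `o` (all other outcome variables being marginalised). -/
noncomputable def margFC {Δ : Type} [Fintype Δ] [DecidableEq Δ]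
    {ISet OSet : Δ → Type} [∀ X, Fintype (OSet X)] [∀ X, DecidableEq (OSet X)]
    (P : (∀ X, ISet X) → (∀ X, OSet X) → CRel Δ → ℝ)
    (i : ∀ X, ISet X) (X : Δ) (𝒴 𝒵 : Finset (PVar Δ)) (κ₀ : CRel Δ)
    (o : ∀ X', OSet X') : ℝ :=
  ∑ o' ∈ Finset.univ.filter
      (fun o' : ∀ X', OSet X' => ∀ X', OVv X' ∈ 𝒴 ∪ 𝒵 → o' X' = o X'),
    ∑ κ ∈ Finset.univ.filter (fun κ : CRel Δ =>
        pastSet κ (IVv X) = 𝒴 ∧ elseSet κ (IVv X) = 𝒵 ∧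
        ∀ a ∈ 𝒴 ∪ 𝒵, ∀ b ∈ 𝒴 ∪ 𝒵, κ a b = κ₀ a b),
      P i o' κ

/-- Free choice: for every party `X`, all disjoint subsets `𝒴, 𝒵 ⊆ Γ \ {I_X}`, every SPO
`κ₀` on `𝒴 ∪ 𝒵` and all outcome values of the parties whose outcome variable lies in
`𝒴 ∪ 𝒵`, the marginal probability `margFC` does not depend on the value of `i_X`. -/
def FreeChoice {Δ : Type} [Fintype Δ] [DecidableEq Δ]
    {ISet OSet : Δ → Type} [∀ X, Fintype (OSet X)] [∀ X, DecidableEq (OSet X)]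
    (P : (∀ X, ISet X) → (∀ X, OSet X) → CRel Δ → ℝ) : Prop :=
  ∀ (X : Δ) (𝒴 𝒵 : Finset (PVar Δ)),
    IVv X ∉ 𝒴 → IVv X ∉ 𝒵 → Disjoint 𝒴 𝒵 →
    ∀ κ₀ : CRel Δ, IsSPOOn κ₀ (𝒴 ∪ 𝒵) →
    ∀ (o : ∀ X', OSet X') (i i' : ∀ X', ISet X'),
      (∀ X', X' ≠ X → i X' = i' X') →
      margFC P i X 𝒴 𝒵 κ₀ o = margFC P i' X 𝒴 𝒵 κ₀ o

/-- The closed-laboratory structural conditions on the causal order. -/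
def ClosedLabStruct {Δ : Type} (κ : CRel Δ) : Prop :=
  ∀ (X : Δ) (Y : PVar Δ),
    (κ (IVv X) Y = true ↔ (Y = OVv X ∨ Y = XOv X ∨ κ (XOv X) Y = true)) ∧
    (κ Y (OVv X) = true ↔ (Y = IVv X ∨ Y = XIv X ∨ κ Y (XIv X) = true))

/-- Closed laboratories: positive-probability causal orders satisfy the structural
conditions, and for each party `X` there is a setting value `i_X*` for which
`X_I ≺ X_O` holds with certainty. -/
def ClosedLab {Δ : Type} {ISet OSet : Δ → Type}
    (P : (∀ X, ISet X) → (∀ X, OSet X) → CRel Δ → ℝ) : Prop :=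
  (∀ i o κ, 0 < P i o κ → ClosedLabStruct κ) ∧
  ∀ X : Δ, ∃ istar : ISet X,
    ∀ i o κ, i X = istar → 0 < P i o κ → κ (XIv X) (XOv X) = true

/-- The coarse-grained relation `𝒞_κ` on the parties: `X 𝒞_κ Y` iff there is a chain
`X_O ≺ Λ^{(1)}_I`, `Λ^{(j)}_O ≺ Λ^{(j+1)}_I`, …, `Λ^{(M)}_O ≺ Y_I` (with `M ≥ 0`). -/
def coarse {Δ : Type} (κ : CRel Δ) : Δ → Δ → Prop :=
  Relation.TransGen (fun W V => κ (XOv W) (XIv V) = true)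

section AuxProof

variable {Δ : Type} [Fintype Δ] [DecidableEq Δ]

lemma pvar_ne {a b : Fin 4} (h : a ≠ b) (x y : Δ) : ((x, a) : PVar Δ) ≠ (y, b) :=
  fun hc => h (congrArg Prod.snd hc)

lemma XIv_ne_OVv (x y : Δ) : XIv x ≠ OVv y := pvar_ne (by decide) x y
lemma XIv_ne_XOv (x y : Δ) : XIv x ≠ XOv y := pvar_ne (by decide) x y
lemma XIv_ne_IVv (x y : Δ) : XIv x ≠ IVv y := pvar_ne (by decide) x y
lemma XOv_ne_OVv (x y : Δ) : XOv x ≠ OVv y := pvar_ne (by decide) x y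
lemma XOv_ne_IVv (x y : Δ) : XOv x ≠ IVv y := pvar_ne (by decide) x y

lemma bool_eq_false' {b : Bool} (h : ¬ b = true) : b = false := by cases b <;> simp_all

lemma bool_eq_true' {b : Bool} (h : ¬ b = false) : b = true := by cases b <;> simp_all

lemma mem_U_iff {κ : CRel Δ} (hκ : IsSPO κ) (v Y : PVar Δ) :
    Y ∈ pastSet κ v ∪ elseSet κ v ↔ (Y ≠ v ∧ κ v Y = false) := by
  simp only [Finset.mem_union, pastSet, elseSet, Finset.mem_filter, Finset.mem_univ, true_and]
  constructor
  · rintro (h | ⟨h1, h2, h3⟩)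
    · constructor
      · rintro rfl
        rw [hκ.1] at h
        exact Bool.false_ne_true h
      · by_contra hc
        have hvy := bool_eq_true' hc
        have := hκ.2 v Y v hvy h
        rw [hκ.1 v] at this
        exact Bool.false_ne_true this
    · exact ⟨h1, h3⟩
  · rintro ⟨h1, h2⟩
    by_cases hc : κ Y v = true
    · exact Or.inl hc
    · exact Or.inr ⟨h1, bool_eq_false' hc, h2⟩

lemma spo_true_iff {κ : CRel Δ} (hκ : IsSPO κ) (v Y : PVar Δ) :
    κ v Y = true ↔ (Y ≠ v ∧ Y ∉ pastSet κ v ∪ elseSet κ v) := by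
  rw [mem_U_iff hκ]
  constructor
  · intro h
    have hne : Y ≠ v := by
      rintro rfl
      rw [hκ.1] at h
      exact Bool.false_ne_true h
    exact ⟨hne, fun hc => by rw [hc.2] at h; exact Bool.false_ne_true h⟩
  · rintro ⟨h1, h2⟩
    by_contra hc
    exact h2 ⟨h1, bool_eq_false' hc⟩

/-- If the causal past and elsewhere of `v` agree for two SPOs, then the strict future of
`v` also agrees. -/
lemma Ifix {κ κ' : CRel Δ} (hκ : IsSPO κ) (hκ' : IsSPO κ') (v : PVar Δ)
    (hp : pastSet κ' v = pastSet κ v) (he : elseSet κ' v = elseSet κ v) (Y : PVar Δ) :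
    κ' v Y = κ v Y := by
  have h1 : κ' v Y = true ↔ κ v Y = true := by
    rw [spo_true_iff hκ' v Y, spo_true_iff hκ v Y, hp, he]
  cases hv : κ v Y with
  | true => exact h1.mpr hv
  | false =>
    cases hv' : κ' v Y with
    | true => rw [hv] at h1; exact absurd (h1.mp hv') Bool.false_ne_true
    | false => rfl

/-- The key switching argument from free choice and closed laboratories: from a
positive-probability causal order `κ`, one obtains a positive-probability causal order
`κ'` (for the setting `i*` of party `X`) that has the same causal past and elsewhere of
`I_X`, agrees with `κ` on them, and satisfies `X_I ≺ X_O`. -/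
lemma switch_lemma {ISet OSet : Δ → Type}
    [∀ X, Fintype (OSet X)] [∀ X, DecidableEq (OSet X)]
    (P : (∀ X, ISet X) → (∀ X, OSet X) → CRel Δ → ℝ)
    (hPos : ∀ i o κ, 0 ≤ P i o κ)
    (hSupp : ∀ i o κ, P i o κ ≠ 0 → IsSPO κ)
    (hFC : FreeChoice P) (hCL : ClosedLab P)
    {i : ∀ X, ISet X} {o : ∀ X, OSet X} {κ : CRel Δ} (h : 0 < P i o κ) (X : Δ) :
    ∃ i' o' κ', 0 < P i' o' κ' ∧
      pastSet κ' (IVv X) = pastSet κ (IVv X) ∧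
      elseSet κ' (IVv X) = elseSet κ (IVv X) ∧
      (∀ a ∈ pastSet κ (IVv X) ∪ elseSet κ (IVv X),
        ∀ b ∈ pastSet κ (IVv X) ∪ elseSet κ (IVv X), κ' a b = κ a b) ∧
      κ' (XIv X) (XOv X) = true := by
  have hSPO : IsSPO κ := hSupp i o κ h.ne'
  obtain ⟨istar, histar⟩ := hCL.2 X
  set 𝒴 := pastSet κ (IVv X) with h𝒴
  set 𝒵 := elseSet κ (IVv X) with h𝒵
  set i' := Function.update i X istar with hi'
  -- the term (o, κ) appears in the marginal for `i`
  have homem : o ∈ Finset.univ.filter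
      (fun o' : ∀ X', OSet X' => ∀ X', OVv X' ∈ 𝒴 ∪ 𝒵 → o' X' = o X') := by
    simp
  have hκmem : κ ∈ Finset.univ.filter (fun κ'' : CRel Δ =>
      pastSet κ'' (IVv X) = 𝒴 ∧ elseSet κ'' (IVv X) = 𝒵 ∧
      ∀ a ∈ 𝒴 ∪ 𝒵, ∀ b ∈ 𝒴 ∪ 𝒵, κ'' a b = κ a b) := by
    simp [h𝒴, h𝒵]
  have hm : P i o κ ≤ margFC P i X 𝒴 𝒵 κ o := by
    unfold margFC
    calc P i o κ ≤ ∑ κ'' ∈ Finset.univ.filter (fun κ'' : CRel Δ =>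
          pastSet κ'' (IVv X) = 𝒴 ∧ elseSet κ'' (IVv X) = 𝒵 ∧
          ∀ a ∈ 𝒴 ∪ 𝒵, ∀ b ∈ 𝒴 ∪ 𝒵, κ'' a b = κ a b), P i o κ'' :=
        Finset.single_le_sum (fun k _ => hPos i o k) hκmem
      _ ≤ _ :=
        Finset.single_le_sum
          (fun o' _ => Finset.sum_nonneg fun k _ => hPos i o' k) homem
  -- free choice
  have hYni : IVv X ∉ 𝒴 := by
    simp [h𝒴, pastSet, hSPO.1 (IVv X)]
  have hZni : IVv X ∉ 𝒵 := by
    simp [h𝒵, elseSet]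
  have hdisj : Disjoint 𝒴 𝒵 := by
    rw [Finset.disjoint_left]
    intro a ha hb
    rw [h𝒴, pastSet, Finset.mem_filter] at ha
    rw [h𝒵, elseSet, Finset.mem_filter] at hb
    rw [ha.2] at hb
    exact Bool.false_ne_true hb.2.2.1.symm
  have hspoon : IsSPOOn κ (𝒴 ∪ 𝒵) :=
    ⟨fun a _ => hSPO.1 a, fun a _ b _ c _ => hSPO.2 a b c⟩
  have heq := hFC X 𝒴 𝒵 hYni hZni hdisj κ hspoon o i i'
    (fun X' hne => (Function.update_of_ne hne istar i).symm)
  have hpos' : 0 < margFC P i' X 𝒴 𝒵 κ o := heq ▸ lt_of_lt_of_le h hm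
  -- extract a positive term
  unfold margFC at hpos'
  have h1 : ∃ o'' ∈ Finset.univ.filter
      (fun o' : ∀ X', OSet X' => ∀ X', OVv X' ∈ 𝒴 ∪ 𝒵 → o' X' = o X'),
      0 < ∑ κ'' ∈ Finset.univ.filter (fun κ'' : CRel Δ =>
        pastSet κ'' (IVv X) = 𝒴 ∧ elseSet κ'' (IVv X) = 𝒵 ∧
        ∀ a ∈ 𝒴 ∪ 𝒵, ∀ b ∈ 𝒴 ∪ 𝒵, κ'' a b = κ a b), P i' o'' κ'' := by
    by_contra hc
    push_neg at hc
    have := Finset.sum_nonpos hc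
    linarith
  obtain ⟨o'', ho''mem, ho''⟩ := h1
  have h2 : ∃ κ'' ∈ Finset.univ.filter (fun κ'' : CRel Δ =>
      pastSet κ'' (IVv X) = 𝒴 ∧ elseSet κ'' (IVv X) = 𝒵 ∧
      ∀ a ∈ 𝒴 ∪ 𝒵, ∀ b ∈ 𝒴 ∪ 𝒵, κ'' a b = κ a b), 0 < P i' o'' κ'' := by
    by_contra hc
    push_neg at hc
    have := Finset.sum_nonpos hc
    linarith
  obtain ⟨κ'', hκ''mem, hκ''⟩ := h2
  simp only [Finset.mem_filter, Finset.mem_univ, true_and] at hκ''mem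
  refine ⟨i', o'', κ'', hκ'', hκ''mem.1, hκ''mem.2.1, hκ''mem.2.2, ?_⟩
  exact histar i' o'' κ'' (Function.update_self X istar i) hκ''

/-- The main acyclicity argument: a positive-probability causal order admits no
coarse-grained cycle, by strong induction on the length of the cycle. -/
lemma no_cycle {ISet OSet : Δ → Type}
    [∀ X, Fintype (OSet X)] [∀ X, DecidableEq (OSet X)]
    (P : (∀ X, ISet X) → (∀ X, OSet X) → CRel Δ → ℝ)
    (hPos : ∀ i o κ, 0 ≤ P i o κ)
    (hSupp : ∀ i o κ, P i o κ ≠ 0 → IsSPO κ)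
    (hFC : FreeChoice P) (hCL : ClosedLab P) :
    ∀ n (i : ∀ X, ISet X) (o : ∀ X, OSet X) (κ : CRel Δ), 0 < P i o κ →
      ∀ W : ℕ → Δ, W n = W 0 →
        (∀ j, j < n → κ (XOv (W j)) (XIv (W (j + 1))) = true) → n = 0 := by
  intro n
  induction n using Nat.strong_induction_on with
  | _ n ih =>
    intro i o κ hpk W hWn hedge
    by_contra hn0
    have hSPO : IsSPO κ := hSupp i o κ hpk.ne'
    have hCLS : ClosedLabStruct κ := hCL.1 i o κ hpk
    -- switch party (W 0) to its i* setting
    obtain ⟨i', o', κ', hp', hpast, helse, hagree, hstar⟩ :=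
      switch_lemma P hPos hSupp hFC hCL hpk (W 0)
    have hSPO' : IsSPO κ' := hSupp i' o' κ' hp'.ne'
    have hCLS' : ClosedLabStruct κ' := hCL.1 i' o' κ' hp'
    have hIfix : ∀ Y, κ' (IVv (W 0)) Y = κ (IVv (W 0)) Y :=
      Ifix hSPO hSPO' (IVv (W 0)) hpast helse
    -- key fact: I_X ⊀ X_I in κ, hence X_O ⊀ X_I in κ
    have hIXI : κ (IVv (W 0)) (XIv (W 0)) = false := by
      by_contra hc
      have h1 : κ' (IVv (W 0)) (XIv (W 0)) = true := by
        rw [hIfix]; exact bool_eq_true' hc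
      rcases (hCLS' (W 0) (XIv (W 0))).1.mp h1 with h | h | h
      · exact XIv_ne_OVv _ _ h
      · exact XIv_ne_XOv _ _ h
      · have := hSPO'.2 _ _ _ hstar h
        rw [hSPO'.1] at this
        exact Bool.false_ne_true this
    have hXOXI : κ (XOv (W 0)) (XIv (W 0)) = false := by
      by_contra hc
      have := (hCLS (W 0) (XIv (W 0))).1.mpr (Or.inr (Or.inr (bool_eq_true' hc)))
      rw [hIXI] at this
      exact Bool.false_ne_true this
    -- chopping: a direct edge from X_O to W_m_I with 2 ≤ m ≤ n gives a shorter cycle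
    have chop : ∀ m, 2 ≤ m → m ≤ n → κ (XOv (W 0)) (XIv (W m)) = true → False := by
      intro m hm2 hmn hcomp
      have hz := ih (n - m + 1) (by omega) i o κ hpk
        (fun k => match k with
          | 0 => W 0
          | Nat.succ k => W (m + k))
        (by
          show W (m + (n - m)) = W 0
          rw [show m + (n - m) = n from by omega, hWn])
        (by
          intro k hk
          cases k with
          | zero => exact hcomp
          | succ k =>
            show κ (XOv (W (m + k))) (XIv (W (m + k + 1))) = true
            exact hedge (m + k) (by omega))
      omega
    -- case n = 1
    have hn1 : n ≠ 1 := by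
      rintro rfl
      have h0 := hedge 0 (by omega)
      rw [hWn] at h0
      rw [hXOXI] at h0
      exact Bool.false_ne_true h0
    have hn2 : 2 ≤ n := by omega
    -- case analysis
    by_cases hA : ∃ j, 1 ≤ j ∧ j < n ∧ κ (IVv (W 0)) (XOv (W j)) = true
    · obtain ⟨j, hj1, hjn, hIO⟩ := hA
      by_cases hWjX : W j = W 0
      · have h0 := hedge j hjn
        rw [hWjX] at h0
        exact chop (j + 1) (by omega) (by omega) h0
      · rcases (hCLS (W 0) (XOv (W j))).1.mp hIO with h | h | h
        · exact XOv_ne_OVv _ _ h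
        · exact hWjX (congrArg Prod.fst h)
        · exact chop (j + 1) (by omega) (by omega)
            (hSPO.2 _ _ _ h (hedge j hjn))
    by_cases hB : ∃ j, 2 ≤ j ∧ j ≤ n ∧ κ (IVv (W 0)) (XIv (W j)) = true
    · obtain ⟨j, hj2, hjn, hIJ⟩ := hB
      by_cases hWjX : W j = W 0
      · rw [hWjX, hIXI] at hIJ
        exact Bool.false_ne_true hIJ
      · rcases (hCLS (W 0) (XIv (W j))).1.mp hIJ with h | h | h
        · exact XIv_ne_OVv _ _ h
        · exact XIv_ne_XOv _ _ h
        · exact chop j hj2 hjn h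
    -- remaining case: transfer the cycle to κ'
    push_neg at hA hB
    have hA' : ∀ j, 1 ≤ j → j < n → κ (IVv (W 0)) (XOv (W j)) = false :=
      fun j h1 h2 => bool_eq_false' (hA j h1 h2)
    have hB' : ∀ j, 2 ≤ j → j ≤ n → κ (IVv (W 0)) (XIv (W j)) = false :=
      fun j h1 h2 => bool_eq_false' (hB j h1 h2)
    have hW1 : W 1 ≠ W 0 := by
      intro hc
      have h0 := hedge 0 (by omega)
      rw [show (0 : ℕ) + 1 = 1 from rfl, hc, hXOXI] at h0
      exact Bool.false_ne_true h0
    have memU : ∀ a : PVar Δ, a ≠ IVv (W 0) → κ (IVv (W 0)) a = false →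
        a ∈ pastSet κ (IVv (W 0)) ∪ elseSet κ (IVv (W 0)) :=
      fun a h1 h2 => (mem_U_iff hSPO (IVv (W 0)) a).mpr ⟨h1, h2⟩
    -- transferred middle edges
    have hmid : ∀ j, 1 ≤ j → j + 1 ≤ n - 1 → κ' (XOv (W j)) (XIv (W (j + 1))) = true := by
      intro j h1 h2
      exact (hagree (XOv (W j))
          (memU (XOv (W j)) (XOv_ne_IVv _ _) (hA' j h1 (by omega)))
          (XIv (W (j + 1)))
          (memU (XIv (W (j + 1))) (XIv_ne_IVv _ _)
            (hB' (j + 1) (by omega) (by omega)))).trans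
        (hedge j (by omega))
    -- the composed last edge in κ'
    have hstep1 : κ' (XOv (W (n - 1))) (XIv (W 0)) = true := by
      have h0 := hedge (n - 1) (by omega)
      rw [show n - 1 + 1 = n from by omega, hWn] at h0
      exact (hagree (XOv (W (n - 1)))
          (memU (XOv (W (n - 1))) (XOv_ne_IVv _ _) (hA' (n - 1) (by omega) (by omega)))
          (XIv (W 0))
          (memU (XIv (W 0)) (XIv_ne_IVv _ _) hIXI)).trans h0
    have hstep3 : κ' (XOv (W 0)) (XIv (W 1)) = true := by
      have h0 := hedge 0 (by omega)
      have hI1 : κ (IVv (W 0)) (XIv (W 1)) = true :=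
        (hCLS (W 0) (XIv (W 1))).1.mpr (Or.inr (Or.inr h0))
      have hI1' : κ' (IVv (W 0)) (XIv (W 1)) = true := by
        rw [hIfix]; exact hI1
      rcases (hCLS' (W 0) (XIv (W 1))).1.mp hI1' with h | h | h
      · exact absurd h (XIv_ne_OVv _ _)
      · exact absurd h (XIv_ne_XOv _ _)
      · exact h
    have hlast : κ' (XOv (W (n - 1))) (XIv (W 1)) = true :=
      hSPO'.2 _ _ _ (hSPO'.2 _ _ _ hstep1 hstar) hstep3
    -- shorter cycle in κ'
    have hz := ih (n - 1) (by omega) i' o' κ' hp'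
      (Function.update (fun k => W (k + 1)) (n - 1) (W 1))
      (by
        rw [Function.update_self, Function.update_of_ne (by omega : (0 : ℕ) ≠ n - 1)])
      (by
        intro k hk
        by_cases hk2 : k = n - 2
        · subst hk2
          rw [Function.update_of_ne (by omega : n - 2 ≠ n - 1),
            show n - 2 + 1 = n - 1 from by omega, Function.update_self]
          exact hlast
        · rw [Function.update_of_ne (by omega : k ≠ n - 1),
            Function.update_of_ne (by omega : k + 1 ≠ n - 1)]
          show κ' (XOv (W (k + 1))) (XIv (W (k + 1 + 1))) = true
          exact hmid (k + 1) (by omega) (by omega))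
    omega

/-- Every transitive-closure relation is witnessed by a finite chain. -/
lemma transgen_chain {α : Type*} {R : α → α → Prop} {a b : α}
    (h : Relation.TransGen R a b) :
    ∃ n, 0 < n ∧ ∃ W : ℕ → α, W 0 = a ∧ W n = b ∧ ∀ j, j < n → R (W j) (W (j + 1)) := by
  induction h with
  | @single b' hab =>
    refine ⟨1, one_pos, fun k => if k = 0 then a else b', by simp, by simp, ?_⟩
    intro j hj
    interval_cases j
    simpa using hab
  | @tail b c hab hbc ihh =>
    obtain ⟨m, hm, W, h0, hm', he⟩ := ihh
    refine ⟨m + 1, by omega, Function.update W (m + 1) c, ?_, by simp, ?_⟩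
    · rw [Function.update_of_ne (by omega)]; exact h0
    · intro j hj
      by_cases hjm : j = m
      · subst hjm
        rw [Function.update_of_ne (by omega), Function.update_self, hm']
        exact hbc
      · rw [Function.update_of_ne (by omega : j ≠ m + 1),
          Function.update_of_ne (by omega : j + 1 ≠ m + 1)]
        exact he j (by omega)

end AuxProof

/-- if the family of distributions `P(o, κ | i)` satisfies the free choice
and closed laboratories assumptions, then for every setting assignment `i`, outcome
assignment `o` and SPO `κ` with `P(o, κ | i) > 0`, the coarse-grained relation `𝒞_κ` is a
strict partial order on the set of parties `Δ`. -/
theorem coarse_relation_is_SPO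
    {Δ : Type} [Fintype Δ] [DecidableEq Δ]
    {ISet OSet : Δ → Type}
    [∀ X, Fintype (ISet X)] [∀ X, DecidableEq (ISet X)] [∀ X, Nonempty (ISet X)]
    [∀ X, Fintype (OSet X)] [∀ X, DecidableEq (OSet X)]
    (P : (∀ X, ISet X) → (∀ X, OSet X) → CRel Δ → ℝ)
    (hPos : ∀ i o κ, 0 ≤ P i o κ)
    (hNorm : ∀ i, (∑ o : ∀ X, OSet X, ∑ κ : CRel Δ, P i o κ) = 1)
    (hSupp : ∀ i o κ, P i o κ ≠ 0 → IsSPO κ)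
    (hFC : FreeChoice P)
    (hCL : ClosedLab P) :
    ∀ i o κ, 0 < P i o κ →
      (∀ X : Δ, ¬ coarse κ X X) ∧
      (∀ X Y Z : Δ, coarse κ X Y → coarse κ Y Z → coarse κ X Z) := by
  intro i o κ h
  constructor
  · intro X hcyc
    obtain ⟨n, hn, W, hW0, hWn, hedges⟩ := transgen_chain hcyc
    have := no_cycle P hPos hSupp hFC hCL n i o κ h W (by rw [hWn, hW0]) hedges
    omega
  · exact fun X Y Z h1 h2 => h1.trans h2
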